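/- Let M = S + iK be a 2×2 Hermitian complex matrix, where S is real symmetric and K is real skew-symmetric, both invertible. Then M is positive definite if and only if S is positive definite and S + K S⁻¹ K is positive definite. -/

import Mathlib

open Matrix Complex
open scoped ComplexOrder

lemma real_posdef_fin_two (A : Matrix (Fin 2) (Fin 2) ℝ) (h : A.IsHermitian) :
    A.PosDef ↔ 0 < A 0 0 ∧ 0 < A.det := by
  have hsym : A 1 0 = A 0 1 := by
    have := congrFun (congrFun h 0) 1
    simpa [conjTranspose, Matrix.transpose] using this
  constructor
  · intro hA
    refine ⟨?_, hA.det_pos⟩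
    have hne : (![1, 0] : Fin 2 → ℝ) ≠ 0 := by
      intro hh; exact one_ne_zero (congrFun hh 0)
    have := hA.dotProduct_mulVec_pos hne
    simpa [dotProduct, mulVec, Fin.sum_univ_two] using this
  · rintro ⟨ha, hd⟩
    refine Matrix.PosDef.of_dotProduct_mulVec_pos h fun x hx => ?_
    have hdet : A.det = A 0 0 * A 1 1 - A 0 1 * A 1 0 := by
      simp [Matrix.det_fin_two]
    simp only [dotProduct, mulVec, Fin.sum_univ_two, star_trivial]
    set x0 := x 0 with hx0
    set x1 := x 1 with hx1
    have key : A 0 0 * (x0 * (A 0 0 * x0 + A 0 1 * x1) + x1 * (A 1 0 * x0 + A 1 1 * x1))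
        = (A 0 0 * x0 + A 0 1 * x1)^2 + A.det * x1^2 := by
      rw [hdet, hsym]; ring
    have hx01 : x0 ≠ 0 ∨ x1 ≠ 0 := by
      by_contra hc
      push_neg at hc
      refine hx (funext fun i => ?_)
      fin_cases i
      · exact hc.1
      · exact hc.2
    have hpos : 0 < (A 0 0 * x0 + A 0 1 * x1)^2 + A.det * x1^2 := by
      rcases eq_or_ne x1 0 with h1 | h1
      · have h0 : x0 ≠ 0 := by
          rcases hx01 with h0 | h1'
          · exact h0
          · exact absurd h1 h1'
        have hne : A 0 0 * x0 + A 0 1 * x1 ≠ 0 := by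
          rw [h1, mul_zero, add_zero]; exact mul_ne_zero (ne_of_gt ha) h0
        have := pow_pos (abs_pos.mpr hne) 2
        nlinarith [_root_.sq_abs (A 0 0 * x0 + A 0 1 * x1), sq_nonneg x1]
      · have := mul_pos hd (pow_pos (abs_pos.mpr h1) 2)
        nlinarith [sq_nonneg (A 0 0 * x0 + A 0 1 * x1), _root_.sq_abs x1]
    nlinarith [key, hpos, ha]

lemma cplx_posdef_fin_two (a b d k : ℝ) (M : Matrix (Fin 2) (Fin 2) ℂ)
    (hM : M = !![(a:ℂ), b + Complex.I*k; b - Complex.I*k, d]) :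
    M.PosDef ↔ 0 < a ∧ 0 < a*d - b^2 - k^2 := by
  subst hM
  have hherm : (!![(a:ℂ), b + Complex.I*k; b - Complex.I*k, d]).IsHermitian := by
    refine Matrix.IsHermitian.ext fun i j => ?_
    fin_cases i <;> fin_cases j <;>
      simp [Matrix.conjTranspose_apply, Complex.ext_iff]
  have hdet : (!![(a:ℂ), b + Complex.I*k; b - Complex.I*k, d]).det
      = ((a*d - b^2 - k^2 : ℝ) : ℂ) := by
    simp only [Matrix.det_fin_two_of]
    push_cast
    ring_nf
    simp [Complex.ext_iff]
    constructor <;> ring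
  constructor
  · intro hA
    constructor
    · have hne : (![1, 0] : Fin 2 → ℂ) ≠ 0 := by
        intro hh; exact one_ne_zero (congrFun hh 0)
      have := hA.dotProduct_mulVec_pos hne
      simp [dotProduct, mulVec, Fin.sum_univ_two] at this
      exact_mod_cast Complex.zero_lt_real.mp (by simpa using this)
    · have := hA.det_pos
      rw [hdet] at this
      exact Complex.zero_lt_real.mp this
  · rintro ⟨ha, hd⟩
    refine Matrix.PosDef.of_dotProduct_mulVec_pos hherm fun x hx => ?_
    simp only [dotProduct, mulVec, Fin.sum_univ_two, Matrix.cons_val', Matrix.cons_val_zero,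
      Matrix.cons_val_one, Matrix.head_cons, Matrix.empty_val', Matrix.cons_val_fin_one,
      Matrix.head_fin_const, Matrix.of_apply, Pi.star_apply, RCLike.star_def]
    set x0 := x 0 with hx0
    set x1 := x 1 with hx1
    set u : ℂ := ↑a * x0 + (↑b + Complex.I*↑k) * x1 with hu
    have key : (a : ℂ) * ((starRingEnd ℂ) x0 * (↑a * x0 + (↑b + Complex.I*↑k) * x1)
        + (starRingEnd ℂ) x1 * ((↑b - Complex.I*↑k) * x0 + ↑d * x1))
        = ↑(Complex.normSq u) + ↑(a*d - b^2 - k^2) * ↑(Complex.normSq x1) := by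
      rw [← Complex.mul_conj, ← Complex.mul_conj, hu]
      simp only [map_add, _root_.map_mul, map_sub, Complex.conj_ofReal, Complex.conj_I]
      push_cast
      linear_combination ((k:ℂ)^2 * x1 * (starRingEnd ℂ) x1) * Complex.I_sq
    have hx01 : x0 ≠ 0 ∨ x1 ≠ 0 := by
      by_contra hc
      push_neg at hc
      refine hx (funext fun i => ?_)
      fin_cases i
      · exact hc.1
      · exact hc.2
    have hw : 0 < Complex.normSq u + (a*d - b^2 - k^2) * Complex.normSq x1 := by
      rcases eq_or_ne x1 0 with h1 | h1
      · have h0 : x0 ≠ 0 := by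
          rcases hx01 with h0 | h1'
          · exact h0
          · exact absurd h1 h1'
        have hune : u ≠ 0 := by
          rw [hu, h1, mul_zero, add_zero]
          exact mul_ne_zero (Complex.ofReal_ne_zero.mpr (ne_of_gt ha)) h0
        have := Complex.normSq_pos.mpr hune
        nlinarith [Complex.normSq_nonneg x1]
      · have := mul_pos hd (Complex.normSq_pos.mpr h1)
        nlinarith [Complex.normSq_nonneg u]
    have hz : (0:ℂ) < (a : ℂ) * ((starRingEnd ℂ) x0 * (↑a * x0 + (↑b + Complex.I*↑k) * x1)
        + (starRingEnd ℂ) x1 * ((↑b - Complex.I*↑k) * x0 + ↑d * x1)) := by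
      rw [key, ← Complex.ofReal_mul, ← Complex.ofReal_add]
      exact Complex.zero_lt_real.mpr hw
    have hane : (a:ℂ) ≠ 0 := Complex.ofReal_ne_zero.mpr ha.ne'
    have hz2 : (starRingEnd ℂ) x0 * (↑a * x0 + (↑b + Complex.I*↑k) * x1)
        + (starRingEnd ℂ) x1 * ((↑b - Complex.I*↑k) * x0 + ↑d * x1)
        = ↑(a⁻¹ * (Complex.normSq u + (a*d - b^2 - k^2) * Complex.normSq x1)) := by
      have key' := key
      push_cast at key' ⊢
      field_simp
      linear_combination key'
    rw [hz2]
    refine Complex.zero_lt_real.mpr ?_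
    exact mul_pos (inv_pos.mpr ha) hw

theorem posdef_iff_real_imaginary_parts (S K : Matrix (Fin 2) (Fin 2) ℝ)
    (hS : Sᵀ = S) (hK : Kᵀ = -K)
    (hSinv : IsUnit S.det) (hKinv : IsUnit K.det)
    (M : Matrix (Fin 2) (Fin 2) ℂ)
    (hM : M = S.map Complex.ofReal + Complex.I • K.map Complex.ofReal) :
    M.PosDef ↔ S.PosDef ∧ (S + K * S⁻¹ * K).PosDef := by
  set a := S 0 0 with ha'
  set b := S 0 1 with hb'
  set d := S 1 1 with hd'
  set k := K 0 1 with hk'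
  have hS10 : S 1 0 = b := by
    have := congrFun (congrFun hS 0) 1
    simpa [Matrix.transpose_apply] using this
  have hK00 : K 0 0 = 0 := by
    have := congrFun (congrFun hK 0) 0
    simp [Matrix.transpose_apply] at this
    linarith
  have hK11 : K 1 1 = 0 := by
    have := congrFun (congrFun hK 1) 1
    simp [Matrix.transpose_apply] at this
    linarith
  have hK10 : K 1 0 = -k := by
    have := congrFun (congrFun hK 0) 1
    simpa [Matrix.transpose_apply] using this
  have hdetS : S.det = a * d - b^2 := by
    rw [Matrix.det_fin_two, hS10]; ring
  have hdetK : K.det = k^2 := by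
    rw [Matrix.det_fin_two, hK00, hK11, hK10]; ring
  have he : a * d - b^2 ≠ 0 := by
    rw [← hdetS]; exact hSinv.ne_zero
  have hk : k ≠ 0 := by
    intro h0
    refine hKinv.ne_zero ?_
    rw [hdetK, h0]; ring
  have hk2 : 0 < k^2 := by positivity
  -- M entries
  have hMeq : M = !![(a:ℂ), b + Complex.I*k; b - Complex.I*k, d] := by
    rw [hM]
    ext i j
    fin_cases i <;> fin_cases j <;>
      simp [Matrix.map_apply, hK00, hK11, hK10, hS10] <;> ring
  have hMiff := cplx_posdef_fin_two a b d k M hMeq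
  -- S
  have hSherm : S.IsHermitian := by
    rw [Matrix.IsHermitian, conjTranspose]
    ext i j; simpa using congrFun (congrFun hS i) j
  have hSiff := real_posdef_fin_two S hSherm
  rw [hdetS] at hSiff
  -- T
  set c : ℝ := 1 - k^2 / (a*d - b^2) with hc'
  have hSinv' : S⁻¹ = (a*d-b^2)⁻¹ • !![d, -b; -b, a] := by
    rw [Matrix.inv_def, Matrix.adjugate_fin_two, Ring.inverse_eq_inv, hdetS, hS10]
  have hT : S + K * S⁻¹ * K = c • S := by
    rw [hSinv']
    ext i j
    fin_cases i <;> fin_cases j <;>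
      · simp [Matrix.mul_apply, Fin.sum_univ_two, Matrix.smul_apply, hK00, hK11, hK10, hS10,
          hc', ← ha', ← hb', ← hd', ← hk']
        field_simp
        ring
  have hTherm : (S + K * S⁻¹ * K).IsHermitian := by
    rw [hT]
    show (c • S)ᴴ = c • S
    rw [Matrix.conjTranspose_smul, hSherm, star_trivial]
  have hTiff := real_posdef_fin_two _ hTherm
  rw [hT] at hTiff
  have hT00 : (c • S) 0 0 = c * a := by simp [Matrix.smul_apply, ha']
  have hTdet : (c • S).det = c^2 * (a*d - b^2) := by
    rw [Matrix.det_smul, hdetS]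
    norm_num
  rw [hT, hTiff, hMiff, hSiff, hT00, hTdet]
  constructor
  · rintro ⟨hA, hB⟩
    have heP : 0 < a*d - b^2 := by nlinarith
    have hcP : 0 < c := by
      rw [hc']
      rw [sub_pos, div_lt_one heP]
      linarith
    exact ⟨⟨hA, heP⟩, ⟨mul_pos hcP hA, by positivity⟩⟩
  · rintro ⟨⟨hA, heP⟩, ⟨hca, _⟩⟩
    refine ⟨hA, ?_⟩
    have hcP : 0 < c := by nlinarith
    have hce : c * (a*d-b^2) = a*d-b^2-k^2 := by
      rw [hc']; field_simp
    nlinarith [mul_pos hcP heP]
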